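/- arXiv:2604.20189 — 2 statements merged into one kernel-verified Lean document; each statement's English description precedes it below -/
import Mathlib

section
/- Let k ≥ 2 and let 0 < α₁ < α₂ < ⋯ < α_k be integers with gcd(α₁,…,α_k) = 1, and assume that αᵢ ≢ αⱼ (mod α₁) for all 1 ≤ i < j ≤ k. Then F(α₁,…,α_k) ≤ 2·α_k·⌊α₁/k⌋ − α₁; equivalently, every integer n > 2·α_k·⌊α₁/k⌋ − α₁ can be written as n = x₁α₁ + ⋯ + x_kα_k with x₁,…,x_k ∈ ℕ. -/
namespace ProjMonomialCurve

/-- The numerical semigroup generated by `a 1, …, a k` (equivalently by `A₁ = {0,a 1,…,a k}`). -/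
def S1 (k : ℕ) (a : ℕ → ℕ) : Set ℕ :=
  {n | ∃ x : ℕ → ℕ, n = ∑ i ∈ Finset.Icc 1 k, x i * a i}

/-- The numerical semigroup generated by the nonzero elements `d - a i` (`0 ≤ i ≤ k-1`)
of `A₂`, where `d = a k`. -/
def S2 (k : ℕ) (a : ℕ → ℕ) : Set ℕ :=
  {n | ∃ x : ℕ → ℕ, n = ∑ i ∈ Finset.range k, x i * (a k - a i)}

/-- `δ₁ n`: least total number of summands over representations `n = ∑ xᵢ aᵢ`. -/
noncomputable def delta1 (k : ℕ) (a : ℕ → ℕ) (n : ℕ) : ℕ :=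
  sInf {m | ∃ x : ℕ → ℕ, n = ∑ i ∈ Finset.Icc 1 k, x i * a i ∧ m = ∑ i ∈ Finset.Icc 1 k, x i}

/-- `δ₂ n`: least total number of summands over representations of `n` by the
nonzero elements of `A₂`. -/
noncomputable def delta2 (k : ℕ) (a : ℕ → ℕ) (n : ℕ) : ℕ :=
  sInf {m | ∃ x : ℕ → ℕ,
    n = ∑ i ∈ Finset.range k, x i * (a k - a i) ∧ m = ∑ i ∈ Finset.range k, x i}

/-- `ω₁ i`: the least element of `S₍₁₎` congruent to `i` modulo `d = a k`. -/
noncomputable def omega1 (k : ℕ) (a : ℕ → ℕ) (i : ℕ) : ℕ :=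
  sInf {n | n ∈ S1 k a ∧ n % a k = i % a k}

/-- `ω₂ i`: the least element of `S₍₂₎` congruent to `i` modulo `d = a k`. -/
noncomputable def omega2 (k : ℕ) (a : ℕ → ℕ) (i : ℕ) : ℕ :=
  sInf {n | n ∈ S2 k a ∧ n % a k = i % a k}

/-- `w i = (ω₁(i), ω₂(d-i))`. -/
noncomputable def w (k : ℕ) (a : ℕ → ℕ) (i : ℕ) : ℕ × ℕ :=
  (omega1 k a i, omega2 k a (a k - i))

/-- `e h = (h, d - h)`. -/
def e (k : ℕ) (a : ℕ → ℕ) (h : ℕ) : ℕ × ℕ := (h, a k - h)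

/-- The affine semigroup `S ⊆ ℕ²` generated by `e (a 0), …, e (a k)`. -/
def S (k : ℕ) (a : ℕ → ℕ) : Set (ℕ × ℕ) :=
  {u | ∃ x : ℕ → ℕ, u = ∑ i ∈ Finset.range (k+1), x i • e k a (a i)}

/-- `S' = {u ∈ ℕ² | u + p•e₀ ∈ S and u + p•e_d ∈ S for some p ∈ ℕ}`. -/
def S' (k : ℕ) (a : ℕ → ℕ) : Set (ℕ × ℕ) :=
  {u | ∃ p : ℕ, u + p • e k a 0 ∈ S k a ∧ u + p • e k a (a k) ∈ S k a}

/-- `deg u = (u₁ + u₂)/d` for `u ∈ ℕ²`. -/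
def deg (k : ℕ) (a : ℕ → ℕ) (u : ℕ × ℕ) : ℕ := (u.1 + u.2) / a k

/-- The index set `𝕀`. -/
noncomputable def II (k : ℕ) (a : ℕ → ℕ) : Set ℕ :=
  {i | 1 ≤ i ∧ i ≤ a k - 1 ∧ (∀ j, 1 ≤ j → j ≤ k - 1 → i ≠ a j) ∧
    deg k a (w k a i) < delta1 k a (w k a i).1}

/-- `T = {u ∈ ℤ² | d ∣ u₁+u₂, u₁ ∉ S₍₁₎, u₂ ∉ S₍₂₎}`. -/
def T (k : ℕ) (a : ℕ → ℕ) : Set (ℤ × ℤ) :=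
  {u | (a k : ℤ) ∣ u.1 + u.2 ∧ (∀ n ∈ S1 k a, (n : ℤ) ≠ u.1) ∧ (∀ n ∈ S2 k a, (n : ℤ) ≠ u.2)}

/-- `deg` for integer points. -/
def degZ (k : ℕ) (a : ℕ → ℕ) (u : ℤ × ℤ) : ℤ := (u.1 + u.2) / (a k : ℤ)

/-- The Castelnuovo–Mumford regularity, expressed combinatorially:
`max({deg u + 1 : u ∈ S'∖S} ∪ {deg u + 2 : u ∈ T})`. -/
noncomputable def reg (k : ℕ) (a : ℕ → ℕ) : ℤ :=
  sSup ({z : ℤ | ∃ u ∈ S' k a \ S k a, z = (deg k a u : ℤ) + 1} ∪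
        {z : ℤ | ∃ u ∈ T k a, z = degZ k a u + 2})

/-- Frobenius number of `S₍₁₎` (greatest integer not in it; `-1` if the semigroup is all of `ℕ`). -/
noncomputable def F1 (k : ℕ) (a : ℕ → ℕ) : ℤ :=
  sSup {z : ℤ | ∀ n ∈ S1 k a, (n : ℤ) ≠ z}

/-- Frobenius number of `S₍₂₎`. -/
noncomputable def F2 (k : ℕ) (a : ℕ → ℕ) : ℤ :=
  sSup {z : ℤ | ∀ n ∈ S2 k a, (n : ℤ) ≠ z}

/-- The largest gap `λ_max = max_{1 ≤ i ≤ k} (a i - a (i-1) - 1)`. -/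
def lamMax (k : ℕ) (a : ℕ → ℕ) : ℕ :=
  (Finset.Icc 1 k).sup (fun i => a i - a (i-1) - 1)

/-- The second largest gap: the minimum over `i` of the largest gap among indices `≠ i`. -/
noncomputable def lamSl (k : ℕ) (a : ℕ → ℕ) : ℕ :=
  sInf {m | ∃ i, 1 ≤ i ∧ i ≤ k ∧
    m = ((Finset.Icc 1 k).erase i).sup (fun j => a j - a (j-1) - 1)}

/-- The set `A₁ = {a 0, a 1, …, a k}`. -/
def A1set (k : ℕ) (a : ℕ → ℕ) : Set ℕ := {m | ∃ j ≤ k, a j = m}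


set_option linter.unusedSectionVars false
set_option linter.unusedVariables false

namespace EGKit
open Finset
open scoped Pointwise

variable {G : Type} [AddCommGroup G] [Fintype G] [DecidableEq G]

/-- translate of a finset -/
def tr (g : G) (X : Finset G) : Finset G := X.image (fun y => g + y)

lemma mem_tr {g a : G} {X : Finset G} : a ∈ tr g X ↔ ∃ y ∈ X, g + y = a := by
  simp only [tr, Finset.mem_image]

lemma card_tr (g : G) (X : Finset G) : (tr g X).card = X.card :=
  card_image_of_injective _ (add_right_injective g)

lemma tr_add (g : G) (X C : Finset G) : tr g X + C = tr g (X + C) := by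
  ext a
  simp only [mem_tr, Finset.mem_add]
  constructor
  · rintro ⟨y, ⟨x, hx, rfl⟩, c, hc, rfl⟩
    exact ⟨x + c, ⟨x, hx, c, hc, rfl⟩, by rw [add_assoc]⟩
  · rintro ⟨z, ⟨x, hx, c, hc, rfl⟩, rfl⟩
    exact ⟨g + x, ⟨x, hx, rfl⟩, c, hc, by rw [add_assoc]⟩

lemma tr_tr (g h : G) (X : Finset G) : tr g (tr h X) = tr (g + h) X := by
  ext a
  simp only [mem_tr]
  constructor
  · rintro ⟨y, ⟨x, hx, rfl⟩, rfl⟩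
    exact ⟨x, hx, by rw [add_assoc]⟩
  · rintro ⟨x, hx, rfl⟩
    exact ⟨h + x, ⟨x, hx, rfl⟩, by rw [add_assoc]⟩

lemma card_lt_of_ne_univ {s : Finset G} (h : s ≠ univ) : s.card < Fintype.card G := by
  rw [← Finset.card_univ]
  exact Finset.card_lt_card (Finset.ssubset_univ_iff.mpr h)

lemma ne_univ_of_card_lt {s : Finset G} (h : s.card < Fintype.card G) : s ≠ univ := by
  rintro rfl
  simp [Finset.card_univ] at h

/-- The fragments of `C`: nonempty sets whose `C`-sumset is not everything. -/
def frags (C : Finset G) : Finset (Finset G) :=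
  (univ : Finset (Finset G)).filter (fun X => X.Nonempty ∧ X + C ≠ univ)

lemma mem_frags {C X : Finset G} : X ∈ frags C ↔ X.Nonempty ∧ X + C ≠ univ := by
  simp [frags]

/-- the connectivity constant -/
noncomputable def kap (C : Finset G) : ℕ :=
  sInf ((fun X : Finset G => (X + C).card - X.card) '' (frags C : Set (Finset G)))

/-- atoms: fragments achieving the connectivity -/
noncomputable def atoms (C : Finset G) : Finset (Finset G) :=
  (frags C).filter (fun X => (X + C).card = X.card + kap C)

lemma mem_atoms {C X : Finset G} :
    X ∈ atoms C ↔ X ∈ frags C ∧ (X + C).card = X.card + kap C := by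
  simp [atoms]

/-- minimal size of an atom -/
noncomputable def asize (C : Finset G) : ℕ :=
  sInf (Finset.card '' (atoms C : Set (Finset G)))

lemma zero_add_finset (C : Finset G) : ({0} : Finset G) + C = C := by
  ext a; simp [Finset.mem_add]

lemma singleton_zero_mem_frags {C : Finset G} (hCu : C ≠ univ) :
    ({0} : Finset G) ∈ frags C := by
  rw [mem_frags, zero_add_finset]
  exact ⟨⟨0, mem_singleton_self 0⟩, hCu⟩

lemma subset_add_self {C X : Finset G} (h0C : (0:G) ∈ C) : X ⊆ X + C := by
  intro a ha
  have := Finset.add_mem_add ha h0C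
  rwa [add_zero] at this

lemma kap_le {C X : Finset G} (hX : X ∈ frags C) :
    kap C ≤ (X + C).card - X.card :=
  Nat.sInf_le ⟨X, Finset.mem_coe.2 hX, rfl⟩

lemma kap_le' {C X : Finset G} (h0C : (0:G) ∈ C) (hX : X ∈ frags C) :
    X.card + kap C ≤ (X + C).card := by
  have h1 := kap_le hX
  have h2 := Finset.card_le_card (subset_add_self (X := X) h0C)
  omega

lemma atoms_nonempty {C : Finset G} (h0C : (0:G) ∈ C) (hCu : C ≠ univ) :
    ∃ X, X ∈ atoms C := by
  have hne : ((fun X : Finset G => (X + C).card - X.card) '' ↑(frags C)).Nonempty :=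
    ⟨_, ⟨{0}, Finset.mem_coe.2 (singleton_zero_mem_frags hCu), rfl⟩⟩
  obtain ⟨X, hX, hXe⟩ := Nat.sInf_mem hne
  have hX' := Finset.mem_coe.1 hX
  refine ⟨X, mem_atoms.2 ⟨hX', ?_⟩⟩
  have h2 := Finset.card_le_card (subset_add_self (X := X) h0C)
  have : kap C = (X + C).card - X.card := hXe.symm
  omega

lemma exists_atom {C : Finset G} (h0C : (0:G) ∈ C) (hCu : C ≠ univ) :
    ∃ X, X ∈ atoms C ∧ X.card = asize C := by
  obtain ⟨X0, hX0⟩ := atoms_nonempty h0C hCu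
  have hne : (Finset.card '' ↑(atoms C)).Nonempty := ⟨_, ⟨X0, Finset.mem_coe.2 hX0, rfl⟩⟩
  obtain ⟨X, hX, hXe⟩ := Nat.sInf_mem hne
  exact ⟨X, Finset.mem_coe.1 hX, hXe⟩

lemma asize_le {C X : Finset G} (hX : X ∈ atoms C) : asize C ≤ X.card :=
  Nat.sInf_le ⟨X, Finset.mem_coe.2 hX, rfl⟩

/-- translates of atoms are atoms -/
lemma tr_atom {C X : Finset G} (hX : X ∈ atoms C) (g : G) : tr g X ∈ atoms C := by
  obtain ⟨hXf, hXe⟩ := mem_atoms.1 hX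
  obtain ⟨hXne, hXCu⟩ := mem_frags.1 hXf
  have h1 : tr g X + C = tr g (X + C) := tr_add g X C
  refine mem_atoms.2 ⟨mem_frags.2 ⟨?_, ?_⟩, ?_⟩
  · obtain ⟨x, hx⟩ := hXne
    exact ⟨g + x, mem_tr.2 ⟨x, hx, rfl⟩⟩
  · rw [h1]
    apply ne_univ_of_card_lt
    rw [card_tr]
    exact card_lt_of_ne_univ hXCu
  · rw [h1, card_tr, card_tr, hXe]

/-- negation of a finset -/
def negg (C : Finset G) : Finset G := C.image (fun z => -z)

lemma mem_negg {C : Finset G} {a : G} : a ∈ negg C ↔ -a ∈ C := by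
  constructor
  · rintro h
    obtain ⟨b, hb, rfl⟩ := Finset.mem_image.1 h
    rwa [neg_neg]
  · intro h
    exact Finset.mem_image.2 ⟨-a, h, neg_neg a⟩

lemma card_negg (C : Finset G) : (negg C).card = C.card :=
  card_image_of_injective _ neg_injective

lemma negg_negg (C : Finset G) : negg (negg C) = C := by
  ext a
  rw [mem_negg, mem_negg, neg_neg]

lemma zero_mem_negg {C : Finset G} (h0C : (0:G) ∈ C) : (0:G) ∈ negg C := by
  rw [mem_negg, neg_zero]; exact h0C

lemma negg_ne_univ {C : Finset G} (hCu : C ≠ univ) : negg C ≠ univ := by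
  apply ne_univ_of_card_lt
  rw [card_negg]
  exact card_lt_of_ne_univ hCu

/-- the complement-of-sumset of a fragment, as a fragment of `negg C` -/
lemma star_facts {C X : Finset G} (h0C : (0:G) ∈ C) (hXf : X ∈ frags C) :
    (univ \ (X + C)) ∈ frags (negg C) ∧
    (univ \ (X + C)) + negg C ⊆ univ \ X := by
  obtain ⟨hXne, hXCu⟩ := mem_frags.1 hXf
  have hsub : (univ \ (X + C)) + negg C ⊆ univ \ X := by
    intro a ha
    obtain ⟨y, hy, c', hc', rfl⟩ := Finset.mem_add.1 ha
    rw [Finset.mem_sdiff] at hy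
    rw [Finset.mem_sdiff]
    refine ⟨mem_univ _, fun haX => ?_⟩
    apply hy.2
    have : (y + c') + (-c') ∈ X + C := Finset.add_mem_add haX (mem_negg.1 hc')
    rwa [add_neg_cancel_right] at this
  refine ⟨mem_frags.2 ⟨?_, ?_⟩, hsub⟩
  · rw [← Finset.card_pos, Finset.card_sdiff_of_subset (Finset.subset_univ _), Finset.card_univ]
    have := card_lt_of_ne_univ hXCu
    omega
  · intro h
    obtain ⟨x, hx⟩ := hXne
    have hx2 : x ∈ (univ \ (X + C)) + negg C := by rw [h]; exact mem_univ x
    have hx3 := hsub hx2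
    rw [Finset.mem_sdiff] at hx3
    exact hx3.2 hx

lemma kap_negg_le {C : Finset G} (h0C : (0:G) ∈ C) (hCu : C ≠ univ) :
    kap (negg C) ≤ kap C := by
  obtain ⟨X, hX⟩ := atoms_nonempty h0C hCu
  obtain ⟨hXf, hXe⟩ := mem_atoms.1 hX
  obtain ⟨hYf, hsub⟩ := star_facts h0C hXf
  set Y := univ \ (X + C) with hY
  have hYcard : Y.card = Fintype.card G - (X + C).card := by
    rw [hY, Finset.card_sdiff_of_subset (Finset.subset_univ _), Finset.card_univ]
  have hup : (Y + negg C).card ≤ Fintype.card G - X.card := by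
    calc (Y + negg C).card ≤ (univ \ X).card := Finset.card_le_card hsub
    _ = Fintype.card G - X.card := by
        rw [Finset.card_sdiff_of_subset (Finset.subset_univ _), Finset.card_univ]
  have h1 := kap_le hYf
  have h2 : (X + C).card ≤ Fintype.card G := by
    rw [← Finset.card_univ]; exact Finset.card_le_card (Finset.subset_univ _)
  have hXC := Finset.card_le_card (subset_add_self (X := X) h0C)
  omega

lemma kap_negg {C : Finset G} (h0C : (0:G) ∈ C) (hCu : C ≠ univ) :
    kap (negg C) = kap C := by
  have h1 := kap_negg_le h0C hCu
  have h2 := kap_negg_le (zero_mem_negg h0C) (negg_ne_univ hCu)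
  rw [negg_negg] at h2
  omega

/-- the star of an actual atom is an atom of `negg C` -/
lemma star_atom {C X : Finset G} (h0C : (0:G) ∈ C) (hCu : C ≠ univ) (hX : X ∈ atoms C) :
    (univ \ (X + C)) ∈ atoms (negg C) := by
  obtain ⟨hXf, hXe⟩ := mem_atoms.1 hX
  obtain ⟨hYf, hsub⟩ := star_facts h0C hXf
  set Y := univ \ (X + C) with hY
  have hYcard : Y.card = Fintype.card G - (X + C).card := by
    rw [hY, Finset.card_sdiff_of_subset (Finset.subset_univ _), Finset.card_univ]
  have hup : (Y + negg C).card ≤ Fintype.card G - X.card := by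
    calc (Y + negg C).card ≤ (univ \ X).card := Finset.card_le_card hsub
    _ = Fintype.card G - X.card := by
        rw [Finset.card_sdiff_of_subset (Finset.subset_univ _), Finset.card_univ]
  have hlow := kap_le' (zero_mem_negg h0C) hYf
  have hkneg := kap_negg h0C hCu
  have h2 : (X + C).card ≤ Fintype.card G := by
    rw [← Finset.card_univ]; exact Finset.card_le_card (Finset.subset_univ _)
  exact mem_atoms.2 ⟨hYf, by omega⟩

/-- key inequality : the group is big compared to atoms -/
lemma card_ge_of_atom {C X : Finset G} (h0C : (0:G) ∈ C) (hCu : C ≠ univ)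
    (hmin : asize C ≤ asize (negg C)) (hX : X ∈ atoms C) (hXc : X.card = asize C) :
    2 * asize C + kap C ≤ Fintype.card G := by
  obtain ⟨hXf, hXe⟩ := mem_atoms.1 hX
  have hstar := star_atom h0C hCu hX
  have h1 : asize (negg C) ≤ (univ \ (X + C)).card := asize_le hstar
  have h2 : (univ \ (X + C)).card = Fintype.card G - (X + C).card := by
    rw [Finset.card_sdiff_of_subset (Finset.subset_univ _), Finset.card_univ]
  have h3 : (X + C).card ≤ Fintype.card G := by
    rw [← Finset.card_univ]; exact Finset.card_le_card (Finset.subset_univ _)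
  omega

/-- two minimal atoms that intersect are equal -/
lemma atom_inter {C X Y : Finset G} (h0C : (0:G) ∈ C) (hCu : C ≠ univ)
    (hmin : asize C ≤ asize (negg C))
    (hX : X ∈ atoms C) (hXc : X.card = asize C)
    (hY : Y ∈ atoms C) (hYc : Y.card = asize C)
    {g : G} (hgX : g ∈ X) (hgY : g ∈ Y) : X = Y := by
  obtain ⟨hXf, hXe⟩ := mem_atoms.1 hX
  obtain ⟨hYf, hYe⟩ := mem_atoms.1 hY
  obtain ⟨hXne, hXCu⟩ := mem_frags.1 hXf
  obtain ⟨hYne, hYCu⟩ := mem_frags.1 hYf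
  -- submodularity data
  have hun : (X ∪ Y) + C = (X + C) ∪ (Y + C) := Finset.union_add
  have hin : (X ∩ Y) + C ⊆ (X + C) ∩ (Y + C) := Finset.inter_add_subset
  have hcui := Finset.card_union_add_card_inter (X + C) (Y + C)
  have hciu := Finset.card_inter_add_card_union X Y
  have hXYf : (X ∩ Y) ∈ frags C := by
    refine mem_frags.2 ⟨⟨g, Finset.mem_inter.2 ⟨hgX, hgY⟩⟩, fun h => hXCu ?_⟩
    have h1 : (X ∩ Y) + C ⊆ X + C :=
      Finset.add_subset_add_right (Finset.inter_subset_left)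
    rw [h] at h1
    exact Finset.univ_subset_iff.1 h1
  have hXYlow := kap_le' h0C hXYf
  by_cases hu : (X ∪ Y) + C = univ
  · -- impossible case
    exfalso
    have hbig := card_ge_of_atom h0C hCu hmin hX hXc
    have h1 : ((X + C) ∪ (Y + C)).card = Fintype.card G := by
      rw [← hun, hu, Finset.card_univ]
    have h2 : ((X ∩ Y) + C).card ≤ ((X + C) ∩ (Y + C)).card := Finset.card_le_card hin
    have h3 : 1 ≤ (X ∩ Y).card := Finset.card_pos.2 ⟨g, Finset.mem_inter.2 ⟨hgX, hgY⟩⟩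
    omega
  · -- main case
    have hXYunf : (X ∪ Y) ∈ frags C :=
      mem_frags.2 ⟨⟨g, Finset.mem_union_left _ hgX⟩, hu⟩
    have hXYunlow := kap_le' h0C hXYunf
    have h2 : ((X ∩ Y) + C).card ≤ ((X + C) ∩ (Y + C)).card := Finset.card_le_card hin
    have hc0 : ((X ∪ Y) + C).card = ((X + C) ∪ (Y + C)).card := by rw [hun]
    -- deduce X ∩ Y is an atom
    have hXYatom : (X ∩ Y) ∈ atoms C := mem_atoms.2 ⟨hXYf, by omega⟩
    have h4 : asize C ≤ (X ∩ Y).card := asize_le hXYatom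
    have h5 : (X ∩ Y).card ≤ X.card := Finset.card_le_card (Finset.inter_subset_left)
    have h6 : X ∩ Y = X := Finset.eq_of_subset_of_card_le (Finset.inter_subset_left) (by omega)
    have h7 : X ⊆ Y := by
      rw [← h6]; exact Finset.inter_subset_right
    exact Finset.eq_of_subset_of_card_le h7 (by omega)

/-- The atom through 0 is (the carrier of) a subgroup. -/
lemma exists_good_subgroup {C : Finset G} (h0C : (0:G) ∈ C) (hCu : C ≠ univ)
    (hmin : asize C ≤ asize (negg C)) :
    ∃ H : Finset G, (0:G) ∈ H ∧ (∀ g ∈ H, ∀ h ∈ H, g + h ∈ H) ∧ (∀ g ∈ H, -g ∈ H) ∧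
      H ∈ frags C ∧ (H + C).card = H.card + kap C := by
  obtain ⟨X, hX, hXc⟩ := exists_atom h0C hCu
  obtain ⟨hXf, hXe⟩ := mem_atoms.1 hX
  obtain ⟨x0, hx0⟩ := (mem_frags.1 hXf).1
  set H := tr (-x0) X with hH
  have hHatom : H ∈ atoms C := tr_atom hX (-x0)
  have hHcard : H.card = asize C := by rw [hH, card_tr, hXc]
  have h0H : (0:G) ∈ H := mem_tr.2 ⟨x0, hx0, neg_add_cancel x0⟩
  have hstab : ∀ g ∈ H, tr g H = H := by
    intro g hg
    have h1 : tr g H ∈ atoms C := tr_atom hHatom g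
    have h2 : (tr g H).card = asize C := by rw [card_tr, hHcard]
    have hgtr : g ∈ tr g H := mem_tr.2 ⟨0, h0H, add_zero g⟩
    exact atom_inter h0C hCu hmin h1 h2 hHatom hHcard hgtr hg
  have hadd : ∀ g ∈ H, ∀ h ∈ H, g + h ∈ H := by
    intro g hg h hh
    rw [← hstab g hg]
    exact mem_tr.2 ⟨h, hh, rfl⟩
  have hneg : ∀ g ∈ H, -g ∈ H := by
    intro g hg
    have h0' : (0:G) ∈ tr g H := (hstab g hg).symm ▸ h0H
    obtain ⟨h, hh, hgh⟩ := mem_tr.1 h0'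
    have hgeq : -g = h := neg_eq_of_add_eq_zero_right hgh
    rw [hgeq]
    exact hh
  obtain ⟨hHf, hHe⟩ := mem_atoms.1 hHatom
  exact ⟨H, h0H, hadd, hneg, hHf, hHe⟩



section Counting

lemma tr_mem_self {H : Finset G} (h0H : (0:G) ∈ H) (x : G) : x ∈ tr x H :=
  mem_tr.2 ⟨0, h0H, add_zero x⟩

lemma tr_absorb {H : Finset G} (h0H : (0:G) ∈ H)
    (hadd : ∀ g ∈ H, ∀ h ∈ H, g + h ∈ H) {h : G} (hh : h ∈ H) : tr h H = H := by
  apply Finset.eq_of_subset_of_card_le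
  · intro a ha
    obtain ⟨y, hy, rfl⟩ := mem_tr.1 ha
    exact hadd h hh y hy
  · rw [card_tr]

lemma tr_eq_of_mem {H : Finset G} (h0H : (0:G) ∈ H)
    (hadd : ∀ g ∈ H, ∀ h ∈ H, g + h ∈ H) {x y : G} (hy : y ∈ tr x H) :
    tr y H = tr x H := by
  obtain ⟨h, hh, rfl⟩ := mem_tr.1 hy
  rw [← tr_tr x h H, tr_absorb h0H hadd hh]

lemma count_stable {H : Finset G} (h0H : (0:G) ∈ H)
    (hadd : ∀ g ∈ H, ∀ h ∈ H, g + h ∈ H) {D : Finset G}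
    (hD : ∀ x ∈ D, tr x H ⊆ D) :
    D.card = (D.image (fun x => tr x H)).card * H.card := by
  rw [Finset.card_eq_sum_card_image (fun x => tr x H) D]
  rw [Finset.sum_congr rfl (g := fun _ => H.card), Finset.sum_const, smul_eq_mul]
  intro b hb
  obtain ⟨x0, hx0, rfl⟩ := Finset.mem_image.1 hb
  have hfiber : D.filter (fun a => tr a H = tr x0 H) = tr x0 H := by
    ext z
    rw [Finset.mem_filter]
    constructor
    · rintro ⟨hzD, hz⟩
      rw [← hz]
      exact tr_mem_self h0H z
    · intro hz
      exact ⟨hD x0 hx0 hz, tr_eq_of_mem h0H hadd hz⟩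
  rw [hfiber, card_tr]

lemma count_univ {H : Finset G} (h0H : (0:G) ∈ H)
    (hadd : ∀ g ∈ H, ∀ h ∈ H, g + h ∈ H) :
    Fintype.card G = ((univ : Finset G).image (fun x => tr x H)).card * H.card := by
  rw [← Finset.card_univ]
  exact count_stable h0H hadd (fun x _ => Finset.subset_univ _)

lemma count_addC {H : Finset G} (h0H : (0:G) ∈ H)
    (hadd : ∀ g ∈ H, ∀ h ∈ H, g + h ∈ H) (C : Finset G) :
    (H + C).card = (C.image (fun x => tr x H)).card * H.card := by
  have hstable : ∀ x ∈ H + C, tr x H ⊆ H + C := by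
    intro x hx a ha
    obtain ⟨h, hh, c, hc, rfl⟩ := Finset.mem_add.1 hx
    obtain ⟨h', hh', rfl⟩ := mem_tr.1 ha
    have : (h + h') + c ∈ H + C := Finset.add_mem_add (hadd h hh h' hh') hc
    have heq : (h + h') + c = h + c + h' := by abel
    rwa [heq] at this
  rw [count_stable h0H hadd hstable]
  congr 2
  ext S
  simp only [Finset.mem_image]
  constructor
  · rintro ⟨x, hx, rfl⟩
    obtain ⟨h, hh, c, hc, rfl⟩ := Finset.mem_add.1 hx
    exact ⟨c, hc, (tr_eq_of_mem h0H hadd (mem_tr.2 ⟨h, hh, add_comm c h⟩)).symm⟩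
  · rintro ⟨c, hc, rfl⟩
    refine ⟨c, ?_, rfl⟩
    have : (0:G) + c ∈ H + C := Finset.add_mem_add h0H hc
    rwa [zero_add] at this

lemma image_tr_negg {H : Finset G} (h0H : (0:G) ∈ H)
    (hadd : ∀ g ∈ H, ∀ h ∈ H, g + h ∈ H) (hneg : ∀ g ∈ H, -g ∈ H) (C : Finset G) :
    ((negg C).image (fun x => tr x H)).card = (C.image (fun x => tr x H)).card := by
  have hnegH : H.image (fun z => -z) = H := by
    apply Finset.eq_of_subset_of_card_le
    · intro a ha
      obtain ⟨b, hb, rfl⟩ := Finset.mem_image.1 ha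
      exact hneg b hb
    · rw [card_image_of_injective _ neg_injective]
  have key : ∀ c : G, tr (-c) H = (tr c H).image (fun z => -z) := by
    intro c
    ext a
    rw [mem_tr]
    simp only [Finset.mem_image]
    constructor
    · rintro ⟨y, hy, rfl⟩
      refine ⟨c + (-y), ?_, by abel⟩
      exact mem_tr.2 ⟨-y, hneg y hy, rfl⟩
    · rintro ⟨b, hb, rfl⟩
      obtain ⟨y, hy, rfl⟩ := mem_tr.1 hb
      exact ⟨-y, hneg y hy, by abel⟩
  have h1 : (negg C).image (fun x => tr x H)
      = (C.image (fun x => tr x H)).image (fun S => S.image (fun z => -z)) := by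
    rw [negg, Finset.image_image, Finset.image_image]
    apply Finset.image_congr
    intro c _
    exact key c
  rw [h1]
  apply Finset.card_image_of_injective
  have ninv : Function.Involutive (fun S : Finset G => S.image (fun z : G => -z)) := by
    intro S
    simp only [Finset.image_image]
    simp [Function.comp]
  exact ninv.injective

end Counting

section Main

/-- iterated sumsets -/
def Sp (B : Finset G) : ℕ → Finset G
  | 0 => {0}
  | j+1 => Sp B j + B

lemma zero_mem_Sp {B : Finset G} (h0 : (0:G) ∈ B) : ∀ j, (0:G) ∈ Sp B j := by
  intro j
  induction j with
  | zero => exact mem_singleton_self 0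
  | succ j ih =>
      have := Finset.add_mem_add ih h0
      rwa [add_zero] at this

lemma Sp_subset_succ {B : Finset G} (h0 : (0:G) ∈ B) (j : ℕ) :
    Sp B j ⊆ Sp B (j+1) := subset_add_self h0

lemma Sp_mono {B : Finset G} (h0 : (0:G) ∈ B) {i j : ℕ} (hij : i ≤ j) :
    Sp B i ⊆ Sp B j := by
  induction j, hij using Nat.le_induction with
  | base => exact Finset.Subset.refl _
  | succ j hij ih => exact ih.trans (Sp_subset_succ h0 j)

lemma Sp_one (B : Finset G) : Sp B 1 = B := by
  show ({0} : Finset G) + B = B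
  exact zero_add_finset B

lemma Sp_add (B : Finset G) (i j : ℕ) : Sp B (i + j) = Sp B i + Sp B j := by
  induction j with
  | zero =>
      show Sp B i = Sp B i + {0}
      ext a
      simp [Finset.mem_add]
  | succ j ih =>
      show Sp B (i + j) + B = Sp B i + (Sp B j + B)
      rw [ih, add_assoc]

lemma growth {B : Finset G} (h0 : (0:G) ∈ B) :
    ∀ j, 1 ≤ j → Sp B j ≠ univ → B.card + (j - 1) * kap B ≤ (Sp B j).card := by
  intro j
  induction j with
  | zero => omega
  | succ j ih =>
      intro _ hne
      rcases Nat.eq_zero_or_pos j with rfl | hj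
      · rw [Sp_one]; simp
      · have hjne : Sp B j ≠ univ := by
          intro h
          exact hne (Finset.univ_subset_iff.1 (h ▸ Sp_subset_succ h0 j))
        have hIH := ih hj hjne
        have hfrag : Sp B j ∈ frags B :=
          mem_frags.2 ⟨⟨0, zero_mem_Sp h0 j⟩, hne⟩
        have hstep : (Sp B j).card + kap B ≤ (Sp B (j+1)).card := kap_le' h0 hfrag
        have harith : B.card + (j + 1 - 1) * kap B
            = (B.card + (j - 1) * kap B) + kap B := by
          obtain ⟨u, rfl⟩ : ∃ u, j = u + 1 := ⟨j - 1, by omega⟩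
          simp only [Nat.add_sub_cancel]
          ring
        omega

lemma pigeon {X : Finset G} (h : Fintype.card G < 2 * X.card) (r : G) :
    ∃ a ∈ X, ∃ b ∈ X, a + b = r := by
  set Y := X.image (fun y => r - y) with hY
  have hYcard : Y.card = X.card := by
    rw [hY]
    apply Finset.card_image_of_injective
    intro a b hab
    simpa using hab
  have hXY := Finset.card_union_add_card_inter X Y
  have hle : (X ∪ Y).card ≤ Fintype.card G := by
    rw [← Finset.card_univ]; exact Finset.card_le_card (Finset.subset_univ _)
  have hpos : 0 < (X ∩ Y).card := by omega
  obtain ⟨z, hz⟩ := Finset.card_pos.1 hpos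
  rw [Finset.mem_inter] at hz
  obtain ⟨b, hb, hzb⟩ := Finset.mem_image.1 hz.2
  exact ⟨z, hz.1, b, hb, by rw [← hzb]; abel⟩

lemma arith (m k q s c κ : ℕ) (hk : 1 ≤ k) (hkm : k ≤ m) (hq : q = m / k)
    (hc : 2 ≤ c) (hκ : s + κ = c * s) (hksc : k ≤ c * s) :
    m + 1 ≤ 2 * (k + (q - 1) * κ) := by
  have hq1 : 1 ≤ q := by
    rw [hq]
    exact (Nat.one_le_div_iff (by omega)).2 hkm
  obtain ⟨u, rfl⟩ : ∃ u, q = u + 1 := ⟨q - 1, by omega⟩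
  have hmod : k * (u + 1) + m % k = m := by
    rw [hq]
    exact Nat.div_add_mod m k
  have hrk : m % k < k := Nat.mod_lt _ (by omega)
  have h2s : 2 * s ≤ c * s := Nat.mul_le_mul_right s hc
  have hsκ : s ≤ κ := by omega
  have hk2 : k ≤ 2 * κ := by omega
  have hmain : k * u ≤ 2 * κ * u := Nat.mul_le_mul_right u hk2
  have hexp : k * (u + 1) = k * u + k := by ring
  have hgoal : (u + 1 - 1) = u := by omega
  rw [hgoal]
  nlinarith [hmain, hmod, hrk]

lemma key_subgroup {B : Finset G} (h0 : (0:G) ∈ B) (hBu : B ≠ univ) :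
    ∃ H : Finset G, (0:G) ∈ H ∧ (∀ g ∈ H, ∀ h ∈ H, g + h ∈ H) ∧ (∀ g ∈ H, -g ∈ H) ∧
      H ≠ univ ∧ H.card + kap B = (B.image (fun x => tr x H)).card * H.card := by
  rcases le_total (asize B) (asize (negg B)) with hmin | hmin
  · obtain ⟨H, h0H, hadd, hneg, hHf, hHe⟩ := exists_good_subgroup h0 hBu hmin
    refine ⟨H, h0H, hadd, hneg, ?_, ?_⟩
    · intro h
      apply (mem_frags.1 hHf).2
      apply Finset.univ_subset_iff.1
      rw [← h]
      exact subset_add_self h0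
    · rw [← count_addC h0H hadd B, hHe]
  · have h0n : (0:G) ∈ negg B := zero_mem_negg h0
    have hnu : negg B ≠ univ := negg_ne_univ hBu
    have hmin' : asize (negg B) ≤ asize (negg (negg B)) := by
      rw [negg_negg]; exact hmin
    obtain ⟨H, h0H, hadd, hneg, hHf, hHe⟩ := exists_good_subgroup h0n hnu hmin'
    refine ⟨H, h0H, hadd, hneg, ?_, ?_⟩
    · intro h
      apply (mem_frags.1 hHf).2
      apply Finset.univ_subset_iff.1
      rw [← h]
      exact subset_add_self h0n
    · rw [← image_tr_negg h0H hadd hneg B, ← count_addC h0H hadd (negg B), hHe,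
        kap_negg h0 hBu]

theorem abstract_main {B : Finset G} (h0 : (0:G) ∈ B)
    (hgen : AddSubgroup.closure (B : Set G) = ⊤) (x : G) :
    x ∈ Sp B (2 * (Fintype.card G / B.card)) := by
  by_contra hx
  set m := Fintype.card G with hm
  set k := B.card with hk
  set q := m / k with hq
  have hk1 : 1 ≤ k := Finset.card_pos.2 ⟨0, h0⟩
  have hkm : k ≤ m := by
    rw [hk, hm, ← Finset.card_univ]
    exact Finset.card_le_card (Finset.subset_univ _)
  have hq1 : 1 ≤ q := (Nat.one_le_div_iff (by omega)).2 hkm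
  have hSpne : Sp B (2*q) ≠ univ := by
    intro h
    exact hx (h ▸ mem_univ x)
  have hBu : B ≠ univ := by
    intro h
    apply hSpne
    apply Finset.univ_subset_iff.1
    calc univ = Sp B 1 := by rw [Sp_one, h]
    _ ⊆ Sp B (2*q) := Sp_mono h0 (by omega)
  obtain ⟨H, h0H, hadd, hneg, hHu, hHe⟩ := key_subgroup h0 hBu
  set s := H.card with hs
  set c := (B.image (fun x => tr x H)).card with hc
  set t := ((univ : Finset G).image (fun x => tr x H)).card with ht
  have hmst : m = t * s := count_univ h0H hadd
  have hksc : k ≤ c * s := by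
    have h1 : B ⊆ H + B := by
      intro b hb
      have := Finset.add_mem_add h0H hb
      rwa [zero_add] at this
    have h2 := Finset.card_le_card h1
    rwa [count_addC h0H hadd B] at h2
  have hc2 : 2 ≤ c := by
    by_contra hcc
    -- c ≤ 1 : then B ⊆ H
    have hc1 : c = 1 := by
      have : 0 < c := Finset.card_pos.2 ⟨tr 0 H, Finset.mem_image.2 ⟨0, h0, rfl⟩⟩
      omega
    have hBH : B ⊆ H := by
      intro b hb
      have hble : (B.image (fun x => tr x H)).card ≤ 1 := by
        rw [← hc]; omega
      have heq := Finset.card_le_one.1 hble (tr b H)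
        (Finset.mem_image.2 ⟨b, hb, rfl⟩) (tr 0 H) (Finset.mem_image.2 ⟨0, h0, rfl⟩)
      have h2 : b ∈ tr 0 H := heq ▸ tr_mem_self h0H b
      obtain ⟨y, hy, hyb⟩ := mem_tr.1 h2
      rw [zero_add] at hyb
      rwa [hyb] at hy
    -- construct the subgroup
    set Hsub : AddSubgroup G :=
      { carrier := ↑H
        zero_mem' := h0H
        add_mem' := fun ha hb => hadd _ ha _ hb
        neg_mem' := fun ha => hneg _ ha } with hHsub
    have hle : AddSubgroup.closure (B : Set G) ≤ Hsub :=
      AddSubgroup.closure_le Hsub |>.2 (by exact_mod_cast hBH)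
    rw [hgen] at hle
    apply hHu
    apply Finset.eq_univ_of_forall
    intro y
    exact hle (AddSubgroup.mem_top y)
  have hSpq : Sp B q ≠ univ := by
    intro h
    apply hSpne
    apply Finset.univ_subset_iff.1
    rw [← h]
    exact Sp_mono h0 (by omega)
  have hgrow := growth h0 q hq1 hSpq
  have harith := arith m k q s c (kap B) hk1 hkm hq (by omega) (by omega) (by omega)
  have hcard : m < 2 * (Sp B q).card := by omega
  obtain ⟨a, ha, b, hb, hab⟩ := pigeon hcard x
  apply hx
  have : a + b ∈ Sp B q + Sp B q := Finset.add_mem_add ha hb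
  rw [← Sp_add, ← two_mul] at this
  rwa [hab] at this

/-- extraction of explicit representations -/
lemma Sp_rep (s : Finset ℕ) (v : ℕ → G) :
    ∀ n x, x ∈ Sp (s.image v) n →
      ∃ y : ℕ → ℕ, (∑ i ∈ s, y i) = n ∧ (∑ i ∈ s, (y i) • v i) = x := by
  intro n
  induction n with
  | zero =>
      intro x hx
      rw [Finset.mem_singleton.1 hx]
      exact ⟨fun _ => 0, by simp, by simp⟩
  | succ n ih =>
      intro x hx
      obtain ⟨z, hz, b, hb, rfl⟩ := Finset.mem_add.1 hx
      obtain ⟨i0, hi0, rfl⟩ := Finset.mem_image.1 hb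
      obtain ⟨y, hy1, hy2⟩ := ih z hz
      refine ⟨fun i => if i = i0 then y i + 1 else y i, ?_, ?_⟩
      · have : ∀ i ∈ s, (if i = i0 then y i + 1 else y i) = y i + (if i = i0 then 1 else 0) := by
          intro i _
          by_cases h : i = i0 <;> simp [h]
        rw [Finset.sum_congr rfl this, Finset.sum_add_distrib, hy1,
          Finset.sum_ite_eq' s i0 (fun _ => 1), if_pos hi0]
      · have : ∀ i ∈ s, (if i = i0 then y i + 1 else y i) • v i
            = (y i) • v i + (if i = i0 then v i else 0) := by
          intro i _
          by_cases h : i = i0 <;> simp [h, add_nsmul]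
        rw [Finset.sum_congr rfl this, Finset.sum_add_distrib, hy2,
          Finset.sum_ite_eq' s i0 (fun i => v i), if_pos hi0]

end Main

lemma bezout (f : ℕ → ℕ) (s : Finset ℕ) :
    ∃ c : ℕ → ℤ, ((s.gcd f : ℕ) : ℤ) = ∑ i ∈ s, c i * (f i : ℤ) := by
  classical
  induction s using Finset.induction_on with
  | empty => exact ⟨fun _ => 0, by simp⟩
  | @insert a s ha ih =>
      obtain ⟨c, hc⟩ := ih
      refine ⟨fun i => if i = a then Nat.gcdA (f a) (s.gcd f)
        else Nat.gcdB (f a) (s.gcd f) * c i, ?_⟩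
      rw [Finset.gcd_insert, Finset.sum_insert ha]
      have hrest : ∑ i ∈ s, (if i = a then Nat.gcdA (f a) (s.gcd f)
            else Nat.gcdB (f a) (s.gcd f) * c i) * (f i : ℤ)
          = Nat.gcdB (f a) (s.gcd f) * ∑ i ∈ s, c i * (f i : ℤ) := by
        rw [Finset.mul_sum]
        apply Finset.sum_congr rfl
        intro i hi
        rw [if_neg (by rintro rfl; exact ha hi)]
        ring
      rw [hrest, ← hc]
      show ((Nat.gcd (f a) (s.gcd f) : ℕ) : ℤ) = _
      rw [Nat.gcd_eq_gcd_ab (f a) (s.gcd f)]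
      simp only [eq_self_iff_true, if_true]
      ring

lemma closure_top (mm kk : ℕ) [NeZero mm] (α : ℕ → ℕ)
    (hgcd : (Finset.Icc 1 kk).gcd α = 1) :
    AddSubgroup.closure
      ((((Finset.Icc 1 kk).image (fun i => ((α i : ℕ) : ZMod mm)))) : Set (ZMod mm)) = ⊤ := by
  rw [AddSubgroup.eq_top_iff']
  intro x
  have hone : (1 : ZMod mm) ∈ AddSubgroup.closure
      ((((Finset.Icc 1 kk).image (fun i => ((α i : ℕ) : ZMod mm)))) : Set (ZMod mm)) := by
    obtain ⟨c, hc⟩ := bezout α (Finset.Icc 1 kk)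
    rw [hgcd] at hc
    have hc2 := congrArg (fun z : ℤ => ((z : ZMod mm))) hc
    push_cast at hc2
    rw [hc2]
    apply AddSubgroup.sum_mem
    intro i hi
    rw [← zsmul_eq_mul]
    refine AddSubgroup.zsmul_mem _ (AddSubgroup.subset_closure ?_) _
    simp only [Finset.coe_image, Set.mem_image, Finset.mem_coe]
    exact ⟨i, hi, rfl⟩
  have hx : x = x.val • (1 : ZMod mm) := by
    rw [nsmul_eq_mul, mul_one]
    exact (ZMod.natCast_rightInverse x).symm
  rw [hx]
  exact AddSubgroup.nsmul_mem _ hone _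

lemma alpha_mono (k : ℕ) (α : ℕ → ℕ) (hmono : ∀ i, 1 ≤ i → i < k → α i < α (i+1)) :
    ∀ d i, 1 ≤ i → i + d ≤ k → α i ≤ α (i + d) := by
  intro d
  induction d with
  | zero => simp
  | succ d ih =>
      intro i hi hik
      have h1 := ih i hi (by omega)
      have h2 := hmono (i + d) (by omega) (by omega)
      calc α i ≤ α (i+d) := h1
      _ ≤ α (i+d+1) := le_of_lt h2
      _ = α (i + (d+1)) := by ring_nf

end EGKit

theorem statement_0 (k : ℕ) (α : ℕ → ℕ) (hk : 2 ≤ k) (hpos : 0 < α 1)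
    (hmono : ∀ i, 1 ≤ i → i < k → α i < α (i+1))
    (hgcd : (Finset.Icc 1 k).gcd α = 1)
    (hmod : ∀ i j, 1 ≤ i → i < j → j ≤ k → α i % α 1 ≠ α j % α 1) :
    ∀ n : ℤ, 2 * (α k : ℤ) * ((α 1 / k : ℕ) : ℤ) - (α 1 : ℤ) < n →
      ∃ x : ℕ → ℕ, n = ∑ i ∈ Finset.Icc 1 k, (x i : ℤ) * (α i : ℤ) := by
  intro n hn
  have h1k : (1:ℕ) ≤ k := by omega
  have hm2 : 2 ≤ α 1 := by
    by_contra h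
    have hα1 : α 1 = 1 := by omega
    have h12 := hmod 1 2 le_rfl (by omega) hk
    rw [hα1] at h12
    simp [Nat.mod_one] at h12
  haveI : NeZero (α 1) := ⟨by omega⟩
  set B : Finset (ZMod (α 1)) := (Finset.Icc 1 k).image (fun i => ((α i : ℕ) : ZMod (α 1)))
    with hB
  have hcard : B.card = k := by
    rw [hB]
    have hinj : Set.InjOn (fun i => ((α i : ℕ) : ZMod (α 1))) ↑(Finset.Icc 1 k) := by
      intro i hi j hj hij
      rw [Finset.mem_coe, Finset.mem_Icc] at hi hj
      have hij' : ((α i : ℕ) : ZMod (α 1)) = ((α j : ℕ) : ZMod (α 1)) := hij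
      by_contra hne
      rcases Nat.lt_or_ge i j with h | h
      · exact hmod i j hi.1 h hj.2 ((ZMod.natCast_eq_natCast_iff _ _ _).1 hij')
      · have hlt : j < i := by omega
        exact hmod j i hj.1 hlt hi.2 ((ZMod.natCast_eq_natCast_iff _ _ _).1 hij'.symm)
    rw [Finset.card_image_of_injOn hinj, Nat.card_Icc]
    omega
  have h0B : (0 : ZMod (α 1)) ∈ B := by
    rw [hB]
    refine Finset.mem_image.2 ⟨1, Finset.mem_Icc.2 ⟨le_rfl, h1k⟩, ?_⟩
    exact ZMod.natCast_self (α 1)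
  have hgen := EGKit.closure_top (α 1) k α hgcd
  have hmem := EGKit.abstract_main (B := B) h0B (by rw [hB]; exact hgen)
    (((n : ℤ) : ZMod (α 1)))
  have hqcard : Fintype.card (ZMod (α 1)) / B.card = α 1 / k := by
    rw [hcard, ZMod.card]
  rw [hqcard, hB] at hmem
  obtain ⟨y, hylen, hysum⟩ :=
    EGKit.Sp_rep (Finset.Icc 1 k) (fun i => ((α i : ℕ) : ZMod (α 1))) _ _ hmem
  set q := α 1 / k with hq
  set N : ℕ := ∑ i ∈ Finset.Icc 1 k, y i * α i with hN
  have hNcast : ((N : ℤ) : ZMod (α 1)) = ((n : ℤ) : ZMod (α 1)) := by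
    push_cast
    rw [← hysum, hN]
    push_cast
    apply Finset.sum_congr rfl
    intro i _
    rw [nsmul_eq_mul]
  have hdvd : ((α 1 : ℕ) : ℤ) ∣ n - (N:ℤ) :=
    Int.ModEq.dvd ((ZMod.intCast_eq_intCast_iff _ _ _).1 hNcast)
  have hαk : ∀ i ∈ Finset.Icc 1 k, α i ≤ α k := by
    intro i hi
    rw [Finset.mem_Icc] at hi
    have h2 := EGKit.alpha_mono k α hmono (k - i) i hi.1 (by omega)
    rwa [show i + (k - i) = k by omega] at h2
  have hNle : N ≤ 2 * q * α k := by
    rw [hN]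
    calc ∑ i ∈ Finset.Icc 1 k, y i * α i
        ≤ ∑ i ∈ Finset.Icc 1 k, y i * α k := by
          apply Finset.sum_le_sum
          intro i hi
          exact Nat.mul_le_mul_left _ (hαk i hi)
      _ = (∑ i ∈ Finset.Icc 1 k, y i) * α k := by rw [Finset.sum_mul]
      _ = 2 * q * α k := by rw [hylen]
  obtain ⟨z, hz⟩ := hdvd
  have hz0 : 0 ≤ z := by
    by_contra hz0'
    have hz1 : z ≤ -1 := by omega
    have hα1pos : (0:ℤ) < ((α 1 : ℕ) : ℤ) := by exact_mod_cast hpos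
    have hneg : n - (N:ℤ) ≤ -((α 1 : ℕ) : ℤ) := by
      calc n - (N:ℤ) = ((α 1 : ℕ) : ℤ) * z := hz
        _ ≤ ((α 1 : ℕ) : ℤ) * (-1) := by
            exact mul_le_mul_of_nonneg_left hz1 (le_of_lt hα1pos)
        _ = -((α 1 : ℕ) : ℤ) := by ring
    have hNle' : (N : ℤ) ≤ 2 * (q:ℤ) * (α k : ℤ) := by exact_mod_cast hNle
    linarith [hn, hneg, hNle']
  refine ⟨fun i => if i = 1 then y 1 + z.toNat else y i, ?_⟩
  have hsplit : ∑ i ∈ Finset.Icc 1 k,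
        (((if i = 1 then y 1 + z.toNat else y i) : ℕ) : ℤ) * (α i : ℤ)
      = (∑ i ∈ Finset.Icc 1 k, (y i : ℤ) * (α i : ℤ)) + (z.toNat : ℤ) * (α 1 : ℤ) := by
    have hterm : ∀ i ∈ Finset.Icc 1 k,
        (((if i = 1 then y 1 + z.toNat else y i) : ℕ) : ℤ) * (α i : ℤ)
        = (y i : ℤ) * (α i : ℤ) + (if i = 1 then (z.toNat : ℤ) * (α i : ℤ) else 0) := by
      intro i _
      by_cases h : i = 1
      · subst h
        simp only [if_pos rfl]
        push_cast
        ring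
      · simp [h]
    rw [Finset.sum_congr rfl hterm, Finset.sum_add_distrib,
      Finset.sum_ite_eq' (Finset.Icc 1 k) 1 (fun i => (z.toNat : ℤ) * (α i : ℤ)),
      if_pos (Finset.mem_Icc.2 ⟨le_rfl, h1k⟩)]
  rw [hsplit]
  have hNZ : (N : ℤ) = ∑ i ∈ Finset.Icc 1 k, (y i : ℤ) * (α i : ℤ) := by
    rw [hN]
    push_cast
    rfl
  rw [← hNZ, Int.toNat_of_nonneg hz0]
  have hz' : n - (N:ℤ) = z * ((α 1 : ℕ) : ℤ) := by rw [hz]; ring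
  linarith [hz']


end ProjMonomialCurve
end

section
/- 𝕀 = {i : 1 ≤ i ≤ d−1, i ∉ {a₁,…,a_{k−1}}, δ₂(w_i) > deg(w_i)}, and {w_i : i ∈ 𝕀} ⊆ S′∖S ⊆ {w_i + n·e₀ + m·e_d : i ∈ 𝕀, n, m ∈ ℕ}. -/
namespace ProjMonomialCurve

section Aux
variable {k : ℕ} {a : ℕ → ℕ}

lemma mono_le (hmono : ∀ i, i < k → a i < a (i+1)) :
    ∀ {i j}, i ≤ j → j ≤ k → a i ≤ a j := by
  intro i j
  induction j with
  | zero => intro h _; obtain rfl : i = 0 := Nat.le_zero.mp h; exact le_rfl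
  | succ n ih =>
      intro hij hjk
      rcases Nat.eq_or_lt_of_le hij with h | h
      · exact h ▸ le_rfl
      · exact le_trans (ih (by omega) (by omega)) (le_of_lt (hmono n (by omega)))

lemma mono_lt (hmono : ∀ i, i < k → a i < a (i+1)) :
    ∀ {i j}, i < j → j ≤ k → a i < a j := by
  intro i j hij hjk
  have : i + 1 ≤ j := hij
  exact lt_of_lt_of_le (hmono i (by omega)) (mono_le hmono this hjk)

lemma d_pos (hk : 1 ≤ k) (ha0 : a 0 = 0) (hmono : ∀ i, i < k → a i < a (i+1)) :
    0 < a k := ha0 ▸ mono_lt hmono (show 0 < k from hk) le_rfl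

lemma range_eq : Finset.range (k+1) = insert 0 (Finset.Icc 1 k) := by
  ext i; simp [Finset.mem_range, Finset.mem_Icc, Finset.mem_insert]; omega

lemma zero_not_mem : (0:ℕ) ∉ Finset.Icc 1 k := by simp

lemma S1_zero : 0 ∈ S1 k a := ⟨fun _ => 0, by simp⟩

lemma S2_zero : 0 ∈ S2 k a := ⟨fun _ => 0, by simp⟩

lemma S1_add {n m : ℕ} (h1 : n ∈ S1 k a) (h2 : m ∈ S1 k a) : n + m ∈ S1 k a := by
  obtain ⟨x, hx⟩ := h1; obtain ⟨y, hy⟩ := h2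
  exact ⟨fun i => x i + y i, by simp [hx, hy, add_mul, Finset.sum_add_distrib]⟩

lemma S2_add {n m : ℕ} (h1 : n ∈ S2 k a) (h2 : m ∈ S2 k a) : n + m ∈ S2 k a := by
  obtain ⟨x, hx⟩ := h1; obtain ⟨y, hy⟩ := h2
  exact ⟨fun i => x i + y i, by simp [hx, hy, add_mul, Finset.sum_add_distrib]⟩

lemma S1_smul {n : ℕ} (c : ℕ) (h : n ∈ S1 k a) : c * n ∈ S1 k a := by
  obtain ⟨x, hx⟩ := h
  exact ⟨fun i => c * x i, by simp [hx, Finset.mul_sum, mul_assoc]⟩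

lemma S2_smul {n : ℕ} (c : ℕ) (h : n ∈ S2 k a) : c * n ∈ S2 k a := by
  obtain ⟨x, hx⟩ := h
  exact ⟨fun i => c * x i, by simp [hx, Finset.mul_sum, mul_assoc]⟩

lemma S1_gen {j : ℕ} (h1 : 1 ≤ j) (h2 : j ≤ k) : a j ∈ S1 k a := by
  refine ⟨fun i => if i = j then 1 else 0, ?_⟩
  simp only [ite_mul, one_mul, zero_mul]
  rw [Finset.sum_ite_eq' (Finset.Icc 1 k) j (fun i => a i)]
  simp [Finset.mem_Icc, h1, h2]

lemma S2_gen {j : ℕ} (hj : j < k) : a k - a j ∈ S2 k a := by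
  refine ⟨fun i => if i = j then 1 else 0, ?_⟩
  simp only [ite_mul, one_mul, zero_mul]
  rw [Finset.sum_ite_eq' (Finset.range k) j (fun i => a k - a i)]
  simp [Finset.mem_range, hj]

lemma S2_scaled_gen {j : ℕ} (hj2 : j ≤ k) (hd : 0 < a k)
    (hstrict : j < k → a j < a k) :
    ∃ n ∈ S2 k a, n % a k = a j % a k := by
  rcases Nat.eq_or_lt_of_le hj2 with rfl | hlt
  · exact ⟨0, S2_zero, by simp [Nat.mod_self]⟩
  · have hja : a j < a k := hstrict hlt
    obtain ⟨x, hx⟩ := S2_gen (a := a) hlt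
    refine ⟨(a k - 1) * (a k - a j), ⟨fun i => (a k - 1) * x i, by
      rw [hx, Finset.mul_sum]; simp [mul_assoc]⟩, ?_⟩
    have key : (a k - 1) * (a k - a j) = a j + (a k - a j - 1) * a k := by
      zify [show 1 ≤ a k from hd, le_of_lt hja, show 1 ≤ a k - a j by omega]
      ring
    rw [key, Nat.add_mul_mod_self_right]

lemma gcd_resid {P : Set ℕ} {d : ℕ} (hadd : ∀ m n, m ∈ P → n ∈ P → m + n ∈ P)
    (hsmul : ∀ c n, n ∈ P → c * n ∈ P) (hd : 0 < d) {r s : ℕ}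
    (hr : ∃ n ∈ P, n % d = r % d) (hs : ∃ n ∈ P, n % d = s % d) :
    ∃ n ∈ P, n % d = Nat.gcd r s % d := by
  obtain ⟨n₁, hn₁, hm₁⟩ := hr
  obtain ⟨n₂, hn₂, hm₂⟩ := hs
  set A := Nat.gcdA r s with hA
  set B := Nat.gcdB r s with hB
  set M : ℕ := A.natAbs + B.natAbs with hM
  have hA' : (0:ℤ) ≤ A + M * d := by
    have : (A.natAbs : ℤ) ≤ M * d := by
      have : (A.natAbs : ℤ) ≤ M := by exact_mod_cast Nat.le_add_right _ _
      nlinarith [Int.natCast_nonneg M, (by exact_mod_cast hd : (1:ℤ) ≤ d)]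
    omega
  have hB' : (0:ℤ) ≤ B + M * d := by
    have : (B.natAbs : ℤ) ≤ M * d := by
      have : (B.natAbs : ℤ) ≤ M := by exact_mod_cast Nat.le_add_left _ _
      nlinarith [Int.natCast_nonneg M, (by exact_mod_cast hd : (1:ℤ) ≤ d)]
    omega
  refine ⟨(A + M * d).toNat * n₁ + (B + M * d).toNat * n₂,
    hadd _ _ (hsmul _ _ hn₁) (hsmul _ _ hn₂), ?_⟩
  have h1 : (n₁ : ℤ) ≡ r [ZMOD d] := Int.natCast_modEq_iff.mpr hm₁
  have h2 : (n₂ : ℤ) ≡ s [ZMOD d] := Int.natCast_modEq_iff.mpr hm₂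
  have key : ((A + M * d).toNat * n₁ + (B + M * d).toNat * n₂ : ℤ) ≡ Nat.gcd r s [ZMOD d] := by
    have e1 : ((A + M * d).toNat : ℤ) = A + M * d := Int.toNat_of_nonneg hA'
    have e2 : ((B + M * d).toNat : ℤ) = B + M * d := Int.toNat_of_nonneg hB'
    calc ((A + M * d).toNat * n₁ + (B + M * d).toNat * n₂ : ℤ)
        ≡ (A + M * d).toNat * r + (B + M * d).toNat * s [ZMOD d] :=
          (h1.mul_left _).add (h2.mul_left _)
      _ = (r * A + s * B) + (M * r + M * s) * d := by rw [e1, e2]; ring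
      _ ≡ (r * A + s * B) + 0 [ZMOD d] :=
          (Int.ModEq.refl _).add (Int.modEq_zero_iff_dvd.mpr ⟨_, mul_comm _ _⟩)
      _ = Nat.gcd r s := by rw [add_zero, ← Nat.gcd_eq_gcd_ab]
  have : ((A + M * d).toNat * n₁ + (B + M * d).toNat * n₂) ≡ Nat.gcd r s [MOD d] := by
    exact_mod_cast Int.natCast_modEq_iff.mp (by exact_mod_cast key)
  exact this

lemma one_resid {P : Set ℕ} {d : ℕ} (h0 : 0 ∈ P)
    (hadd : ∀ m n, m ∈ P → n ∈ P → m + n ∈ P)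
    (hsmul : ∀ c n, n ∈ P → c * n ∈ P) (hd : 0 < d)
    (hall : ∀ j ∈ Finset.Icc 1 k, ∃ n ∈ P, n % d = a j % d)
    (hgcd : (Finset.Icc 1 k).gcd a = 1) :
    ∃ n ∈ P, n % d = 1 % d := by
  have main : ∀ s : Finset ℕ, (∀ j ∈ s, ∃ n ∈ P, n % d = a j % d) →
      ∃ n ∈ P, n % d = (s.gcd a) % d := by
    intro s
    induction s using Finset.induction with
    | empty => intro _; exact ⟨0, h0, by simp [Finset.gcd_empty]⟩
    | insert _ _ hj ih =>
        intro hyp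
        rw [Finset.gcd_insert]
        exact gcd_resid hadd hsmul hd (hyp _ (Finset.mem_insert_self _ _))
          (ih fun j hjs => hyp j (Finset.mem_insert_of_mem hjs))
  have := main (Finset.Icc 1 k) hall
  rwa [hgcd] at this

lemma delta1_le {n m : ℕ} (x : ℕ → ℕ) (hx : n = ∑ i ∈ Finset.Icc 1 k, x i * a i)
    (hm : m = ∑ i ∈ Finset.Icc 1 k, x i) : delta1 k a n ≤ m :=
  Nat.sInf_le ⟨x, hx, hm⟩

lemma delta1_spec {n : ℕ} (hn : n ∈ S1 k a) :
    ∃ x : ℕ → ℕ, n = ∑ i ∈ Finset.Icc 1 k, x i * a i ∧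
      delta1 k a n = ∑ i ∈ Finset.Icc 1 k, x i := by
  obtain ⟨x, hx⟩ := hn
  exact Nat.sInf_mem (⟨_, x, hx, rfl⟩ :
    Set.Nonempty {m | ∃ x : ℕ → ℕ, n = ∑ i ∈ Finset.Icc 1 k, x i * a i ∧
      m = ∑ i ∈ Finset.Icc 1 k, x i})

lemma delta2_le {n m : ℕ} (x : ℕ → ℕ) (hx : n = ∑ i ∈ Finset.range k, x i * (a k - a i))
    (hm : m = ∑ i ∈ Finset.range k, x i) : delta2 k a n ≤ m :=
  Nat.sInf_le ⟨x, hx, hm⟩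

lemma delta2_spec {n : ℕ} (hn : n ∈ S2 k a) :
    ∃ x : ℕ → ℕ, n = ∑ i ∈ Finset.range k, x i * (a k - a i) ∧
      delta2 k a n = ∑ i ∈ Finset.range k, x i := by
  obtain ⟨x, hx⟩ := hn
  exact Nat.sInf_mem (⟨_, x, hx, rfl⟩ :
    Set.Nonempty {m | ∃ x : ℕ → ℕ, n = ∑ i ∈ Finset.range k, x i * (a k - a i) ∧
      m = ∑ i ∈ Finset.range k, x i})

lemma delta1_subadd {n m : ℕ} (hn : n ∈ S1 k a) (hm : m ∈ S1 k a) :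
    delta1 k a (n + m) ≤ delta1 k a n + delta1 k a m := by
  obtain ⟨x, hx, hdx⟩ := delta1_spec hn
  obtain ⟨y, hy, hdy⟩ := delta1_spec hm
  exact delta1_le (fun i => x i + y i)
    (by rw [hx, hy, ← Finset.sum_add_distrib]; exact Finset.sum_congr rfl fun i _ => by ring)
    (by rw [hdx, hdy, ← Finset.sum_add_distrib])

lemma delta1_gen {j : ℕ} (h1 : 1 ≤ j) (h2 : j ≤ k) : delta1 k a (a j) ≤ 1 := by
  refine delta1_le (fun i => if i = j then 1 else 0) ?_ ?_
  · simp only [ite_mul, one_mul, zero_mul]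
    rw [Finset.sum_ite_eq' (Finset.Icc 1 k) j (fun i => a i)]
    simp [Finset.mem_Icc, h1, h2]
  · rw [Finset.sum_ite_eq' (Finset.Icc 1 k) j (fun _ => 1)]
    simp [Finset.mem_Icc, h1, h2]

lemma delta1_d_mul (hk : 1 ≤ k) (m : ℕ) : delta1 k a (m * a k) ≤ m := by
  refine delta1_le (fun i => if i = k then m else 0) ?_ ?_
  · simp only [ite_mul, zero_mul]
    rw [Finset.sum_ite_eq' (Finset.Icc 1 k) k (fun i => m * a i)]
    simp [Finset.mem_Icc, hk]
  · rw [Finset.sum_ite_eq' (Finset.Icc 1 k) k (fun _ => m)]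
    simp [Finset.mem_Icc, hk]

lemma mem_S_iff1 (hk : 1 ≤ k) (ha0 : a 0 = 0) (hmono : ∀ i, i < k → a i < a (i+1))
    {u : ℕ × ℕ} :
    u ∈ S k a ↔ (a k ∣ u.1 + u.2 ∧ u.1 ∈ S1 k a ∧ delta1 k a u.1 ≤ deg k a u) := by
  have hd := d_pos hk ha0 hmono
  have hale : ∀ i ∈ Finset.range (k+1), a i ≤ a k := fun i hi =>
    mono_le hmono (Nat.lt_succ_iff.mp (Finset.mem_range.mp hi)) le_rfl
  constructor
  · rintro ⟨x, hx⟩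
    have h1 : u.1 = ∑ i ∈ Finset.range (k+1), x i * a i := by
      rw [hx, Prod.fst_sum]; simp [e]
    have h2 : u.2 = ∑ i ∈ Finset.range (k+1), x i * (a k - a i) := by
      rw [hx, Prod.snd_sum]; simp [e]
    have hsum : u.1 + u.2 = (∑ i ∈ Finset.range (k+1), x i) * a k := by
      rw [h1, h2, ← Finset.sum_add_distrib, Finset.sum_mul]
      refine Finset.sum_congr rfl fun i hi => ?_
      rw [← mul_add, Nat.add_sub_cancel' (hale i hi)]
    have hdeg : deg k a u = ∑ i ∈ Finset.range (k+1), x i := by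
      rw [deg, hsum, Nat.mul_div_cancel _ hd]
    have h1' : u.1 = ∑ i ∈ Finset.Icc 1 k, x i * a i := by
      rw [h1, range_eq, Finset.sum_insert zero_not_mem, ha0]; simp
    refine ⟨⟨_, by rw [hsum, Nat.mul_comm]⟩, ⟨x, h1'⟩, ?_⟩
    rw [hdeg, range_eq, Finset.sum_insert zero_not_mem]
    exact le_trans (delta1_le x h1' rfl) (Nat.le_add_left _ _)
  · rintro ⟨⟨c, hc⟩, hS1, hdelta⟩
    have hdeg : deg k a u = c := by rw [deg, hc, Nat.mul_comm, Nat.mul_div_cancel _ hd]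
    obtain ⟨x, hx, hdx⟩ := delta1_spec hS1
    rw [hdeg] at hdelta
    set y : ℕ → ℕ := fun i => if i = 0 then c - delta1 k a u.1 else x i with hy
    have hyIcc : ∀ i ∈ Finset.Icc 1 k, y i = x i := by
      intro i hi; simp only [hy]; rw [if_neg]; simp at hi; omega
    have hy1 : ∑ i ∈ Finset.range (k+1), y i * a i = u.1 := by
      rw [range_eq, Finset.sum_insert zero_not_mem, ha0, hx]
      simp only [Nat.mul_zero, Nat.zero_add]
      exact Finset.sum_congr rfl fun i hi => by rw [hyIcc i hi]
    have hysum : ∑ i ∈ Finset.range (k+1), y i = c := by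
      rw [range_eq, Finset.sum_insert zero_not_mem]
      rw [Finset.sum_congr rfl hyIcc, ← hdx]
      simp only [hy, if_pos rfl]
      omega
    have hy2 : ∑ i ∈ Finset.range (k+1), y i * (a k - a i) = u.2 := by
      have step : ∀ i ∈ Finset.range (k+1), y i * (a k - a i) = y i * a k - y i * a i :=
        fun i _ => Nat.mul_sub _ _ _
      rw [Finset.sum_congr rfl step,
        Finset.sum_tsub_distrib _ (fun i hi => Nat.mul_le_mul_left _ (hale i hi)),
        ← Finset.sum_mul, hysum, hy1, Nat.mul_comm c (a k)]
      omega
    refine ⟨y, ?_⟩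
    have e1 : (∑ i ∈ Finset.range (k+1), y i • e k a (a i)).1
        = ∑ i ∈ Finset.range (k+1), y i * a i := by rw [Prod.fst_sum]; simp [e]
    have e2 : (∑ i ∈ Finset.range (k+1), y i • e k a (a i)).2
        = ∑ i ∈ Finset.range (k+1), y i * (a k - a i) := by rw [Prod.snd_sum]; simp [e]
    exact Prod.ext (by rw [e1, hy1]) (by rw [e2, hy2])

lemma mem_S_iff2 (hk : 1 ≤ k) (ha0 : a 0 = 0) (hmono : ∀ i, i < k → a i < a (i+1))
    {u : ℕ × ℕ} :
    u ∈ S k a ↔ (a k ∣ u.1 + u.2 ∧ u.2 ∈ S2 k a ∧ delta2 k a u.2 ≤ deg k a u) := by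
  have hd := d_pos hk ha0 hmono
  have hale : ∀ i ∈ Finset.range (k+1), a i ≤ a k := fun i hi =>
    mono_le hmono (Nat.lt_succ_iff.mp (Finset.mem_range.mp hi)) le_rfl
  constructor
  · rintro ⟨x, hx⟩
    have h1 : u.1 = ∑ i ∈ Finset.range (k+1), x i * a i := by
      rw [hx, Prod.fst_sum]; simp [e]
    have h2 : u.2 = ∑ i ∈ Finset.range (k+1), x i * (a k - a i) := by
      rw [hx, Prod.snd_sum]; simp [e]
    have hsum : u.1 + u.2 = (∑ i ∈ Finset.range (k+1), x i) * a k := by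
      rw [h1, h2, ← Finset.sum_add_distrib, Finset.sum_mul]
      refine Finset.sum_congr rfl fun i hi => ?_
      rw [← mul_add, Nat.add_sub_cancel' (hale i hi)]
    have hdeg : deg k a u = ∑ i ∈ Finset.range (k+1), x i := by
      rw [deg, hsum, Nat.mul_div_cancel _ hd]
    have h2' : u.2 = ∑ i ∈ Finset.range k, x i * (a k - a i) := by
      rw [h2, Finset.sum_range_succ]; simp
    refine ⟨⟨_, by rw [hsum, Nat.mul_comm]⟩, ⟨x, h2'⟩, ?_⟩
    rw [hdeg, Finset.sum_range_succ]
    exact le_trans (delta2_le x h2' rfl) (Nat.le_add_right _ _)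
  · rintro ⟨⟨c, hc⟩, hS2, hdelta⟩
    have hdeg : deg k a u = c := by rw [deg, hc, Nat.mul_comm, Nat.mul_div_cancel _ hd]
    obtain ⟨x, hx, hdx⟩ := delta2_spec hS2
    rw [hdeg] at hdelta
    set y : ℕ → ℕ := fun i => if i = k then c - delta2 k a u.2 else x i with hy
    have hyr : ∀ i ∈ Finset.range k, y i = x i := by
      intro i hi; simp only [hy]; rw [if_neg]; simp at hi; omega
    have hyr' : ∀ i ∈ Finset.range k, y i * (a k - a i) = x i * (a k - a i) :=
      fun i hi => by rw [hyr i hi]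
    have hy2 : ∑ i ∈ Finset.range (k+1), y i * (a k - a i) = u.2 := by
      rw [Finset.sum_range_succ, Nat.sub_self, Nat.mul_zero, Nat.add_zero, hx]
      exact Finset.sum_congr rfl hyr'
    have hysum : ∑ i ∈ Finset.range (k+1), y i = c := by
      rw [Finset.sum_range_succ, Finset.sum_congr rfl hyr, ← hdx]
      simp only [hy, if_pos rfl]
      omega
    have hy1 : ∑ i ∈ Finset.range (k+1), y i * a i = u.1 := by
      have step : ∀ i ∈ Finset.range (k+1), y i * a i = y i * a k - y i * (a k - a i) := by
        intro i hi
        rw [← Nat.mul_sub, Nat.sub_sub_self (hale i hi)]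
      rw [Finset.sum_congr rfl step,
        Finset.sum_tsub_distrib _ (fun i _ => Nat.mul_le_mul_left _ (Nat.sub_le _ _)),
        ← Finset.sum_mul, hysum, hy2, Nat.mul_comm c (a k)]
      omega
    refine ⟨y, ?_⟩
    have e1 : (∑ i ∈ Finset.range (k+1), y i • e k a (a i)).1
        = ∑ i ∈ Finset.range (k+1), y i * a i := by rw [Prod.fst_sum]; simp [e]
    have e2 : (∑ i ∈ Finset.range (k+1), y i • e k a (a i)).2
        = ∑ i ∈ Finset.range (k+1), y i * (a k - a i) := by rw [Prod.snd_sum]; simp [e]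
    exact Prod.ext (by rw [e1, hy1]) (by rw [e2, hy2])

lemma mem_S'_iff (hk : 1 ≤ k) (ha0 : a 0 = 0) (hmono : ∀ i, i < k → a i < a (i+1))
    {u : ℕ × ℕ} :
    u ∈ S' k a ↔ (a k ∣ u.1 + u.2 ∧ u.1 ∈ S1 k a ∧ u.2 ∈ S2 k a) := by
  have hd := d_pos hk ha0 hmono
  have he0 : e k a 0 = (0, a k) := by simp [e]
  have hed : e k a (a k) = (a k, 0) := by simp [e]
  constructor
  · rintro ⟨p, hp0, hpd⟩
    rw [he0] at hp0; rw [hed] at hpd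
    have h1 := (mem_S_iff1 hk ha0 hmono).mp hp0
    have h2 := (mem_S_iff2 hk ha0 hmono).mp hpd
    simp only [Prod.fst_add, Prod.snd_add, Prod.smul_mk, smul_eq_mul,
      Nat.mul_zero, Nat.add_zero, Nat.mul_comm] at h1 h2
    refine ⟨?_, h1.2.1, h2.2.1⟩
    obtain ⟨c, hc⟩ := h1.1
    have hpc : p ≤ c := by nlinarith [Nat.le_add_left (a k * p) (u.1 + u.2)]
    exact ⟨c - p, by rw [Nat.mul_sub, Nat.mul_comm (a k) p]; omega⟩
  · rintro ⟨hdvd, h1, h2⟩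
    obtain ⟨c, hc⟩ := hdvd
    have hc' : u.1 + u.2 = c * a k := by rw [hc, Nat.mul_comm]
    obtain ⟨p, hp1, hp2⟩ : ∃ p, delta1 k a u.1 ≤ p ∧ delta2 k a u.2 ≤ p :=
      ⟨delta1 k a u.1 + delta2 k a u.2, Nat.le_add_right _ _, Nat.le_add_left _ _⟩
    refine ⟨p, ?_, ?_⟩
    · rw [he0, mem_S_iff1 hk ha0 hmono]
      have hcomp : u + p • ((0 : ℕ), a k) = (u.1, u.2 + p * a k) := by
        ext <;> simp
      rw [hcomp]
      have hsum : u.1 + (u.2 + p * a k) = (c + p) * a k := by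
        rw [Nat.add_mul]; omega
      have hdeg : deg k a (u.1, u.2 + p * a k) = c + p := by
        rw [deg]; simp only; rw [hsum, Nat.mul_div_cancel _ hd]
      exact ⟨⟨c + p, by rw [hsum, Nat.mul_comm]⟩, h1,
        by rw [hdeg]; exact le_trans hp1 (Nat.le_add_left p c)⟩
    · rw [hed, mem_S_iff2 hk ha0 hmono]
      have hcomp : u + p • (a k, (0 : ℕ)) = (u.1 + p * a k, u.2) := by
        ext <;> simp [Nat.mul_comm]
      rw [hcomp]
      have hsum : (u.1 + p * a k) + u.2 = (c + p) * a k := by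
        rw [Nat.add_mul]; omega
      have hdeg : deg k a (u.1 + p * a k, u.2) = c + p := by
        rw [deg]; simp only; rw [hsum, Nat.mul_div_cancel _ hd]
      exact ⟨⟨c + p, by rw [hsum, Nat.mul_comm]⟩, h2,
        by rw [hdeg]; exact le_trans hp2 (Nat.le_add_left p c)⟩

lemma omega1_mem (hk : 1 ≤ k) (ha0 : a 0 = 0) (hmono : ∀ i, i < k → a i < a (i+1))
    (hgcd : (Finset.Icc 1 k).gcd a = 1) (i : ℕ) :
    omega1 k a i ∈ S1 k a ∧ omega1 k a i % a k = i % a k := by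
  have hd := d_pos hk ha0 hmono
  refine Nat.sInf_mem (s := {n | n ∈ S1 k a ∧ n % a k = i % a k}) ?_
  obtain ⟨b, hb, hb1⟩ := one_resid (P := S1 k a) S1_zero
    (fun m n hm hn => S1_add hm hn) (fun c n h => S1_smul c h) hd
    (fun j hj => ⟨a j, S1_gen (Finset.mem_Icc.mp hj).1 (Finset.mem_Icc.mp hj).2, rfl⟩) hgcd
  exact ⟨i * b, S1_smul i hb, by simpa [Nat.ModEq] using Nat.ModEq.mul_left i hb1⟩

lemma omega2_mem (hk : 1 ≤ k) (ha0 : a 0 = 0) (hmono : ∀ i, i < k → a i < a (i+1))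
    (hgcd : (Finset.Icc 1 k).gcd a = 1) (i : ℕ) :
    omega2 k a i ∈ S2 k a ∧ omega2 k a i % a k = i % a k := by
  have hd := d_pos hk ha0 hmono
  refine Nat.sInf_mem (s := {n | n ∈ S2 k a ∧ n % a k = i % a k}) ?_
  obtain ⟨b, hb, hb1⟩ := one_resid (P := S2 k a) S2_zero
    (fun m n hm hn => S2_add hm hn) (fun c n h => S2_smul c h) hd
    (fun j hj => S2_scaled_gen (Finset.mem_Icc.mp hj).2 hd
      (fun hlt => mono_lt hmono hlt le_rfl)) hgcd
  exact ⟨i * b, S2_smul i hb, by simpa [Nat.ModEq] using Nat.ModEq.mul_left i hb1⟩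

end Aux

theorem statement_1 (k : ℕ) (a : ℕ → ℕ) (hk : 3 ≤ k) (ha0 : a 0 = 0)
    (hmono : ∀ i, i < k → a i < a (i+1)) (hgcd : (Finset.Icc 1 k).gcd a = 1) :
    II k a = {i | 1 ≤ i ∧ i ≤ a k - 1 ∧ (∀ j, 1 ≤ j → j ≤ k - 1 → i ≠ a j) ∧
        deg k a (w k a i) < delta2 k a (w k a i).2} ∧
    w k a '' II k a ⊆ S' k a \ S k a ∧
    S' k a \ S k a ⊆
      {u | ∃ i ∈ II k a, ∃ n m : ℕ, u = w k a i + n • e k a 0 + m • e k a (a k)} := by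
  have hk1 : 1 ≤ k := by omega
  have hd : 0 < a k := d_pos hk1 ha0 hmono
  have hwfst : ∀ i, (w k a i).1 = omega1 k a i := fun i => rfl
  have hwsnd : ∀ i, (w k a i).2 = omega2 k a (a k - i) := fun i => rfl
  have hom1 := omega1_mem hk1 ha0 hmono hgcd
  have hom2 := omega2_mem hk1 ha0 hmono hgcd
  have hwS' : ∀ i, 1 ≤ i → i ≤ a k - 1 → w k a i ∈ S' k a := by
    intro i h1 h2
    rw [mem_S'_iff hk1 ha0 hmono]
    refine ⟨?_, (hom1 i).1, (hom2 (a k - i)).1⟩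
    have hc : (omega1 k a i + omega2 k a (a k - i)) % a k = (i + (a k - i)) % a k :=
      Nat.ModEq.add (hom1 i).2 (hom2 (a k - i)).2
    have hiak : i + (a k - i) = a k := by omega
    rw [hiak, Nat.mod_self] at hc
    exact Nat.dvd_of_mod_eq_zero hc
  have hkey : ∀ i, 1 ≤ i → i ≤ a k - 1 →
      (deg k a (w k a i) < delta1 k a (w k a i).1 ↔
       deg k a (w k a i) < delta2 k a (w k a i).2) := by
    intro i h1 h2
    have h' := (mem_S'_iff hk1 ha0 hmono).mp (hwS' i h1 h2)
    have e1 : w k a i ∈ S k a ↔ delta1 k a (w k a i).1 ≤ deg k a (w k a i) := by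
      rw [mem_S_iff1 hk1 ha0 hmono]
      exact ⟨fun h => h.2.2, fun h => ⟨h'.1, h'.2.1, h⟩⟩
    have e2 : w k a i ∈ S k a ↔ delta2 k a (w k a i).2 ≤ deg k a (w k a i) := by
      rw [mem_S_iff2 hk1 ha0 hmono]
      exact ⟨fun h => h.2.2, fun h => ⟨h'.1, h'.2.2, h⟩⟩
    have hnc := not_congr (e1.symm.trans e2)
    rw [Nat.not_le, Nat.not_le] at hnc
    exact hnc
  refine ⟨?_, ?_, ?_⟩
  · ext i
    simp only [II, Set.mem_setOf_eq]
    constructor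
    · rintro ⟨h1, h2, h3, h4⟩; exact ⟨h1, h2, h3, (hkey i h1 h2).mp h4⟩
    · rintro ⟨h1, h2, h3, h4⟩; exact ⟨h1, h2, h3, (hkey i h1 h2).mpr h4⟩
  · rintro u ⟨i, hi, rfl⟩
    obtain ⟨h1, h2, h3, h4⟩ := hi
    refine ⟨hwS' i h1 h2, fun hS => ?_⟩
    have := ((mem_S_iff1 hk1 ha0 hmono).mp hS).2.2
    omega
  · rintro u ⟨huS', huS⟩
    obtain ⟨hdvd, h1, h2⟩ := (mem_S'_iff hk1 ha0 hmono).mp huS'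
    have hlt : deg k a u < delta1 k a u.1 := by
      rcases Nat.lt_or_ge (deg k a u) (delta1 k a u.1) with h | h
      · exact h
      · exact absurd ((mem_S_iff1 hk1 ha0 hmono).mpr ⟨hdvd, h1, h⟩) huS
    set i := u.1 % a k with hidef
    have hid : i < a k := Nat.mod_lt _ hd
    have hi0 : 1 ≤ i := by
      by_contra h0
      have hdvd1 : a k ∣ u.1 := Nat.dvd_of_mod_eq_zero (by omega)
      obtain ⟨m, hm⟩ := hdvd1
      have hδ : delta1 k a u.1 ≤ m := by
        rw [hm, Nat.mul_comm]; exact delta1_d_mul hk1 m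
      have hdegm : m ≤ deg k a u := by
        have hq : m = u.1 / a k := by rw [hm, Nat.mul_div_cancel_left _ hd]
        rw [hq, deg]
        exact Nat.div_le_div_right (Nat.le_add_right _ _)
      omega
    have hcong1 : omega1 k a i % a k = u.1 % a k := by
      rw [(hom1 i).2, hidef, Nat.mod_mod_of_dvd _ dvd_rfl]
    have hle1 : omega1 k a i ≤ u.1 :=
      Nat.sInf_le ⟨h1, by rw [hidef]; exact (Nat.mod_mod_of_dvd _ dvd_rfl).symm⟩
    obtain ⟨m, hm⟩ : ∃ m, u.1 = omega1 k a i + m * a k := by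
      obtain ⟨m, hm⟩ := (Nat.modEq_iff_dvd' hle1).mp hcong1
      exact ⟨m, by rw [Nat.mul_comm]; omega⟩
    obtain ⟨c, hc⟩ := hdvd
    have hmod2 : u.2 % a k = (a k - i) % a k := by
      have hz : (u.2 + i) % a k = 0 := by
        have h' : (u.2 + u.1) % a k = 0 := by
          rw [Nat.add_comm, hc]; exact Nat.mul_mod_right _ _
        have hmq : (u.2 + i) % a k = (u.2 + u.1) % a k :=
          Nat.ModEq.add_left u.2 (by rw [hidef]; exact Nat.mod_mod_of_dvd _ dvd_rfl)
        rw [hmq, h']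
      obtain ⟨t, ht⟩ := Nat.dvd_of_mod_eq_zero hz
      have ht1 : 1 ≤ t := by
        rcases Nat.eq_zero_or_pos t with rfl | h
        · simp at ht; omega
        · exact h
      have hrep : u.2 = (a k - i) + (t - 1) * a k := by
        have htz : (u.2:ℤ) + i = a k * t := by exact_mod_cast ht
        zify [le_of_lt hid, ht1]
        linear_combination htz
      rw [hrep, Nat.add_mul_mod_self_right]
    have hle2 : omega2 k a (a k - i) ≤ u.2 := Nat.sInf_le ⟨h2, hmod2⟩
    have hcong2 : omega2 k a (a k - i) % a k = u.2 % a k := by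
      rw [(hom2 (a k - i)).2, hmod2]
    obtain ⟨n, hn⟩ : ∃ n, u.2 = omega2 k a (a k - i) + n * a k := by
      obtain ⟨n, hn⟩ := (Nat.modEq_iff_dvd' hle2).mp hcong2
      exact ⟨n, by rw [Nat.mul_comm]; omega⟩
    have hdegu : deg k a u = deg k a (w k a i) + (m + n) := by
      rw [deg, deg, hm, hn, hwfst, hwsnd]
      have hrw : omega1 k a i + m * a k + (omega2 k a (a k - i) + n * a k)
          = (omega1 k a i + omega2 k a (a k - i)) + (m + n) * a k := by ring
      rw [hrw, Nat.add_mul_div_right _ _ hd]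
    have hsub : delta1 k a u.1 ≤ delta1 k a (omega1 k a i) + m := by
      rw [hm]
      have hmul : m * a k ∈ S1 k a := S1_smul m (S1_gen hk1 le_rfl)
      have h1' := delta1_subadd (hom1 i).1 hmul
      have h2' := delta1_d_mul (a := a) hk1 m
      omega
    have hnotaj : ∀ j, 1 ≤ j → j ≤ k - 1 → i ≠ a j := by
      intro j hj1 hj2 heq
      have hjk : j ≤ k := by omega
      have hrepu : u.1 = a j + u.1 / a k * a k := by
        rw [← heq, Nat.mul_comm]
        have := Nat.div_add_mod u.1 (a k)
        omega
      have hδ1 : delta1 k a u.1 ≤ 1 + u.1 / a k := by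
        have hmul : u.1 / a k * a k ∈ S1 k a := S1_smul _ (S1_gen hk1 le_rfl)
        have hsb := delta1_subadd (S1_gen hj1 hjk) hmul
        have hg := delta1_gen (a := a) hj1 hjk
        have hdm := delta1_d_mul (a := a) hk1 (u.1 / a k)
        calc delta1 k a u.1 = delta1 k a (a j + u.1 / a k * a k) := by rw [← hrepu]
          _ ≤ delta1 k a (a j) + delta1 k a (u.1 / a k * a k) := hsb
          _ ≤ 1 + u.1 / a k := by omega
      have hu2 : a k - i ≤ u.2 := by
        have : u.2 % a k = a k - i := by rw [hmod2, Nat.mod_eq_of_lt (by omega)]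
        have := Nat.mod_le u.2 (a k)
        omega
      have hdge : u.1 / a k + 1 ≤ deg k a u := by
        rw [deg, Nat.le_div_iff_mul_le hd, Nat.add_mul, Nat.one_mul]
        have h5 : u.1 / a k * a k + i ≤ u.1 := by
          have := Nat.div_add_mod u.1 (a k)
          rw [Nat.mul_comm]
          omega
        omega
      omega
    have hII : i ∈ II k a := by
      refine ⟨hi0, by omega, hnotaj, ?_⟩
      rw [hwfst]
      omega
    refine ⟨i, hII, n, m, ?_⟩
    have hcomp : w k a i + n • e k a 0 + m • e k a (a k)
        = (omega1 k a i + m * a k, omega2 k a (a k - i) + n * a k) := by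
      ext
      · simp [w, e, Nat.mul_comm]
      · simp [w, e, Nat.mul_comm]
    rw [hcomp]
    exact Prod.ext hm hn

end ProjMonomialCurve
end
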